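/- BShap is a limit of CES: Let N be a finite set of features, f : (N → ℝ) → ℝ any model, and x, x' : N → ℝ with x i ≠ x' i for every i ∈ N. For ε ∈ (0,1) let D_ε be the product probability distribution on N → ℝ under which, independently for each feature i, the value equals x i with probability ε and equals x' i with probability 1 − ε. Then for every feature i, ces_i(x, D_ε, f) → bs_i(x, x', f) as ε → 0⁺. -/
import Mathlib


open scoped Classical

noncomputable def shapley {N : Type*} [Fintype N] [DecidableEq N]
    (v : Finset N → ℝ) (i : N) : ℝ :=
  ∑ S ∈ (Finset.univ.erase i).powerset,
    ((S.card.factorial : ℝ) * ((Fintype.card N - S.card - 1).factorial) /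
      (Fintype.card N).factorial) * (v (insert i S) - v S)


noncomputable def bshap {N : Type*} [Fintype N] [DecidableEq N]
    (x x' : N → ℝ) (f : (N → ℝ) → ℝ) (i : N) : ℝ :=
  shapley (fun S => f (fun j => if j ∈ S then x j else x' j)) i


noncomputable def condExp {N : Type*} [Fintype N] [DecidableEq N]
    (T : Finset (N → ℝ)) (p : (N → ℝ) → ℝ) (f : (N → ℝ) → ℝ)
    (x : N → ℝ) (S : Finset N) : ℝ :=
  (∑ t ∈ T.filter fun t => ∀ j ∈ S, t j = x j, p t * f t) /
  (∑ t ∈ T.filter fun t => ∀ j ∈ S, t j = x j, p t)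

noncomputable def ces {N : Type*} [Fintype N] [DecidableEq N]
    (T : Finset (N → ℝ)) (p : (N → ℝ) → ℝ) (x : N → ℝ)
    (f : (N → ℝ) → ℝ) (i : N) : ℝ :=
  shapley (fun S => condExp T p f x S) i


/-- **BShap is a limit of CES** (Lemma 3 of the paper): with the product
distribution `D_ε` in which each feature `i` independently equals `x i` with
probability `ε` and `x' i` with probability `1 - ε`, the CES attribution of
every feature tends to its BShap attribution as `ε → 0⁺`. -/
theorem bshap_is_limit_of_ces {N : Type*} [Fintype N] [DecidableEq N]
    (f : (N → ℝ) → ℝ) (x x' : N → ℝ) (hxx' : ∀ i, x i ≠ x' i) (i : N) :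
    Filter.Tendsto
      (fun ε : ℝ =>
        ces (Finset.image
              (fun S : Finset N => fun j => if j ∈ S then x j else x' j)
              Finset.univ.powerset)
            (fun t => ∏ j, if t j = x j then ε else 1 - ε)
            x f i)
      (nhdsWithin 0 (Set.Ioi 0))
      (nhds (bshap x x' f i)) := by
  classical
  set n := Fintype.card N with hn
  set y : Finset N → (N → ℝ) := fun A => fun j => if j ∈ A then x j else x' j with hy
  have hmem : ∀ (A : Finset N) (j : N), y A j = x j ↔ j ∈ A := by
    intro A j
    by_cases h : j ∈ A <;> simp [y, h, Ne.symm (hxx' j)]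
  have hinj : Function.Injective y := fun A B h => by
    ext j
    rw [← hmem A j, ← hmem B j, h]
  have key : ∀ S : Finset N,
      Filter.Tendsto (fun ε : ℝ =>
        condExp (Finset.image y Finset.univ.powerset)
          (fun t => ∏ j, if t j = x j then ε else 1 - ε) f x S)
        (nhdsWithin 0 (Set.Ioi 0)) (nhds (f (y S))) := by
    intro S
    set M := Finset.univ.powerset.filter (fun A : Finset N => S ⊆ A) with hM
    have hsub : ∀ A ∈ M, S ⊆ A := by
      intro A hA
      simpa [hM] using hA
    have hSM : S ∈ M := by simp [hM]
    set G : ℝ → ℝ := fun ε => ∑ A ∈ M,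
      ε ^ (A.card - S.card) * (1 - ε) ^ (n - A.card) * f (y A) with hG
    set H : ℝ → ℝ := fun ε => ∑ A ∈ M,
      ε ^ (A.card - S.card) * (1 - ε) ^ (n - A.card) with hH
    have hGc : Continuous G := by
      apply continuous_finset_sum
      intro A _
      fun_prop
    have hHc : Continuous H := by
      apply continuous_finset_sum
      intro A _
      fun_prop
    have hG0 : G 0 = f (y S) := by
      rw [hG]; beta_reduce; rw [Finset.sum_eq_single S]
      · simp
      · intro A hA hne
        have h1 : S.card < A.card :=
          Finset.card_lt_card (HasSubset.Subset.ssubset_of_ne (hsub A hA) (Ne.symm hne))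
        rw [zero_pow (Nat.sub_ne_zero_of_lt h1)]
        ring
      · intro h; exact absurd hSM h
    have hH0 : H 0 = 1 := by
      rw [hH]; beta_reduce; rw [Finset.sum_eq_single S]
      · simp
      · intro A hA hne
        have h1 : S.card < A.card :=
          Finset.card_lt_card (HasSubset.Subset.ssubset_of_ne (hsub A hA) (Ne.symm hne))
        rw [zero_pow (Nat.sub_ne_zero_of_lt h1)]
        ring
      · intro h; exact absurd hSM h
    have hcond : ∀ ε ∈ Set.Ioi (0:ℝ),
        condExp (Finset.image y Finset.univ.powerset)
          (fun t => ∏ j, if t j = x j then ε else 1 - ε) f x S = G ε / H ε := by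
      intro ε hε
      have hεpos : (0:ℝ) < ε := hε
      have hfilter : (Finset.image y Finset.univ.powerset).filter
          (fun t => ∀ j ∈ S, t j = x j) = M.image y := by
        rw [Finset.filter_image]
        congr 1
        ext A
        simp [hM, hmem, Finset.subset_iff]
      have hp : ∀ A : Finset N,
          (∏ j, if y A j = x j then ε else 1 - ε) = ε ^ A.card * (1 - ε) ^ (n - A.card) := by
        intro A
        have h1 : ∀ j : N, (if y A j = x j then ε else 1 - ε) = if j ∈ A then ε else 1 - ε := by
          intro j; simp [hmem]
        calc (∏ j, if y A j = x j then ε else 1 - ε)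
            = ∏ j, if j ∈ A then ε else 1 - ε := by
              exact Finset.prod_congr rfl fun j _ => h1 j
          _ = (∏ j ∈ A, if j ∈ A then ε else 1 - ε) *
              ∏ j ∈ Aᶜ, if j ∈ A then ε else 1 - ε :=
              (Finset.prod_mul_prod_compl A _).symm
          _ = ε ^ A.card * (1 - ε) ^ (n - A.card) := by
              rw [Finset.prod_congr rfl (fun j hj => if_pos hj),
                Finset.prod_congr rfl (fun j hj => if_neg (Finset.mem_compl.mp hj)),
                Finset.prod_const, Finset.prod_const, Finset.card_compl]
      have hpow : ∀ A ∈ M, ε ^ A.card = ε ^ S.card * ε ^ (A.card - S.card) := by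
        intro A hA
        rw [← pow_add, Nat.add_sub_cancel' (Finset.card_le_card (hsub A hA))]
      have hnum : (∑ t ∈ (Finset.image y Finset.univ.powerset).filter
            (fun t => ∀ j ∈ S, t j = x j),
            (∏ j, if t j = x j then ε else 1 - ε) * f t) = ε ^ S.card * G ε := by
        rw [hfilter, Finset.sum_image (fun A _ B _ h => hinj h), hG, Finset.mul_sum]
        refine Finset.sum_congr rfl fun A hA => ?_
        rw [hp A, hpow A hA]
        ring
      have hden : (∑ t ∈ (Finset.image y Finset.univ.powerset).filter
            (fun t => ∀ j ∈ S, t j = x j),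
            (∏ j, if t j = x j then ε else 1 - ε)) = ε ^ S.card * H ε := by
        rw [hfilter, Finset.sum_image (fun A _ B _ h => hinj h), hH, Finset.mul_sum]
        refine Finset.sum_congr rfl fun A hA => ?_
        rw [hp A, hpow A hA]
        ring
      rw [condExp, hnum, hden, mul_div_mul_left _ _ (pow_ne_zero _ (ne_of_gt hεpos))]
    have htend : Filter.Tendsto (fun ε => G ε / H ε)
        (nhdsWithin 0 (Set.Ioi 0)) (nhds (f (y S))) := by
      have h := (hGc.tendsto 0).div (hHc.tendsto 0) (by rw [hH0]; norm_num)
      rw [hG0, hH0, div_one] at h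
      exact h.mono_left nhdsWithin_le_nhds
    refine htend.congr' ?_
    filter_upwards [self_mem_nhdsWithin] with ε hε
    exact (hcond ε hε).symm
  show Filter.Tendsto (fun ε : ℝ =>
      ces (Finset.image y Finset.univ.powerset)
        (fun t => ∏ j, if t j = x j then ε else 1 - ε) x f i)
    (nhdsWithin 0 (Set.Ioi 0)) (nhds (bshap x x' f i))
  unfold ces bshap shapley
  apply tendsto_finset_sum
  intro S _
  exact Filter.Tendsto.const_mul _ ((key (insert i S)).sub (key S))
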